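/- Let b ≥ 1 and W ≥ 1 be integers. Let U be a finite index set and, for each u ∈ U, let S_u be a finite multiset of at most b integer weights, each in {1,...,W}; let S be the disjoint union of the S_u. Let M ⊆ S be a sub-multiset with |M| ≤ b such that, within each group S_u, the elements of M ∩ S_u are the heaviest elements of S_u. Then S can be partitioned into b (possibly empty) multisets E_1, ..., E_b such that: (i) each E_i contains at most one element of M; (ii) each E_i contains at most one element from each group S_u; and (iii) for all i, j, the total weights of E_i and E_j differ by at most 2W. Consequently, writing σ for the total weight of S, each E_i has total weight in the interval [σ/b − 2W, σ/b + 2W]. -/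

import Mathlib

open scoped Classical
open Finset

set_option linter.unusedSectionVars false
set_option linter.unusedVariables false

section Decomp
variable {ρ σ : Type*} [Fintype ρ] [Fintype σ] [DecidableEq ρ] [DecidableEq σ]

lemma ED.exists_bij_pos (k : ℕ) (hk : 0 < k) (N : ρ → σ → ℕ)
    (hr : ∀ r, ∑ c, N r c = k) (hc : ∀ c, ∑ r, N r c = k) :
    ∃ e : ρ → σ, Function.Bijective e ∧ ∀ r, 0 < N r (e r) := by
  set t : ρ → Finset σ := fun r => univ.filter (fun c => 0 < N r c) with ht
  have hall : ∀ s : Finset ρ, s.card ≤ (s.biUnion t).card := by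
    intro s
    have h1 : ∀ r ∈ s, ∑ c, N r c = ∑ c ∈ s.biUnion t, N r c := by
      intro r hrs
      refine (Finset.sum_subset (Finset.subset_univ _) ?_).symm
      intro c _ hcn
      by_contra h
      exact hcn (Finset.mem_biUnion.2 ⟨r, hrs, by simp [ht, Nat.pos_of_ne_zero h]⟩)
    have h2 : k * s.card ≤ k * (s.biUnion t).card := by
      calc k * s.card = ∑ r ∈ s, ∑ c, N r c := by
              simp [hr, mul_comm]
        _ = ∑ r ∈ s, ∑ c ∈ s.biUnion t, N r c := Finset.sum_congr rfl h1
        _ = ∑ c ∈ s.biUnion t, ∑ r ∈ s, N r c := Finset.sum_comm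
        _ ≤ ∑ c ∈ s.biUnion t, ∑ r, N r c :=
              Finset.sum_le_sum fun c _ => Finset.sum_le_sum_of_subset (Finset.subset_univ _)
        _ = k * (s.biUnion t).card := by simp [hc, mul_comm]
    exact Nat.le_of_mul_le_mul_left h2 hk
  obtain ⟨e, hinj, hmem⟩ := (Finset.all_card_le_biUnion_card_iff_exists_injective t).1 hall
  have hcard : Fintype.card ρ = Fintype.card σ := by
    have : k * Fintype.card ρ = k * Fintype.card σ := by
      calc k * Fintype.card ρ = ∑ r : ρ, ∑ c, N r c := by simp [hr, mul_comm]
        _ = ∑ c : σ, ∑ r, N r c := Finset.sum_comm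
        _ = k * Fintype.card σ := by simp [hc, mul_comm]
    exact Nat.eq_of_mul_eq_mul_left hk this
  refine ⟨e, (Fintype.bijective_iff_injective_and_card e).2 ⟨hinj, hcard⟩, fun r => ?_⟩
  have := hmem r
  simpa [ht] using this

lemma ED.decomp : ∀ (k : ℕ) (N : ρ → σ → ℕ),
    (∀ r, ∑ c, N r c = k) → (∀ c, ∑ r, N r c = k) →
    ∃ F : Fin k → ρ → σ, (∀ m, Function.Injective (F m)) ∧
      ∀ r c, N r c = (univ.filter (fun m => F m r = c)).card := by
  intro k
  induction k with
  | zero =>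
    intro N hr hc
    refine ⟨fun m => m.elim0, fun m => m.elim0, fun r c => ?_⟩
    have : N r c ≤ ∑ c', N r c' := Finset.single_le_sum (fun _ _ => Nat.zero_le _) (mem_univ c)
    simp [hr r] at this
    simp [this]
  | succ k IH =>
    intro N hr hc
    obtain ⟨e, hbij, hpos⟩ := ED.exists_bij_pos (k+1) (Nat.succ_pos k) N hr hc
    set N' : ρ → σ → ℕ := fun r c => if c = e r then N r c - 1 else N r c with hN'
    have hsplit : ∀ r c, N r c = N' r c + (if c = e r then 1 else 0) := by
      intro r c
      by_cases h : c = e r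
      · subst h; have := hpos r; simp [hN']; omega
      · simp [hN', h]
    have hr' : ∀ r, ∑ c, N' r c = k := by
      intro r
      have h1 : ∑ c, N r c = ∑ c, (N' r c + (if c = e r then 1 else 0)) :=
        Finset.sum_congr rfl fun c _ => hsplit r c
      rw [Finset.sum_add_distrib] at h1
      simp [hr r] at h1
      omega
    have hc' : ∀ c, ∑ r, N' r c = k := by
      intro c
      have h1 : ∑ r, N r c = ∑ r, (N' r c + (if c = e r then 1 else 0)) :=
        Finset.sum_congr rfl fun r _ => hsplit r c
      rw [Finset.sum_add_distrib] at h1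
      have h2 : ∑ r, (if c = e r then 1 else 0) = 1 := by
        set E := Equiv.ofBijective e hbij with hE
        have hcond : ∀ r, (if c = e r then (1:ℕ) else 0) = (if r = E.symm c then 1 else 0) := by
          intro r
          have : (c = e r) ↔ (r = E.symm c) := by
            rw [Equiv.eq_symm_apply]
            exact eq_comm
          simp [this]
        rw [Finset.sum_congr rfl (fun r _ => hcond r)]
        simp
      have h3 := hc c
      omega
    obtain ⟨F', hFinj', hFcount'⟩ := IH N' hr' hc'
    refine ⟨fun m => Fin.cases e F' m, ?_, ?_⟩
    · intro m
      refine Fin.cases ?_ ?_ m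
      · exact hbij.injective
      · exact hFinj'
    · intro r c
      have h1 : (univ.filter (fun m : Fin (k+1) => (Fin.cases e F' m : ρ → σ) r = c)).card
          = ∑ m : Fin (k+1), (if (Fin.cases e F' m : ρ → σ) r = c then 1 else 0) := by
        rw [Finset.card_filter]
      rw [h1, Fin.sum_univ_succ]
      simp only [Fin.cases_zero, Fin.cases_succ]
      have h2 : ∑ m : Fin k, (if F' m r = c then 1 else 0)
          = (univ.filter (fun m : Fin k => F' m r = c)).card := by
        rw [Finset.card_filter]
      erw [h2, ← hFcount' r c, hsplit r c]
      by_cases h : c = e r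
      · simp [h]; omega
      · simp [h, Ne.symm, fun hh : e r = c => h hh.symm]


end Decomp

lemma ED.inj_map {α : Type*} [Fintype α] [DecidableEq α] {b : ℕ} (hb : 0 < b)
    (s : Finset α) (t : Finset (Fin b)) (hle : s.card ≤ t.card) :
    ∃ φ : α → Fin b, (∀ a ∈ s, φ a ∈ t) ∧ ∀ a ∈ s, ∀ a' ∈ s, φ a = φ a' → a = a' := by
  obtain ⟨t', ht's, ht'c⟩ := Finset.exists_subset_card_eq hle
  have e : {x // x ∈ s} ≃ {x // x ∈ t'} := Finset.equivOfCardEq ht'c.symm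
  refine ⟨fun a => if h : a ∈ s then (e ⟨a, h⟩ : Fin b) else ⟨0, hb⟩, ?_, ?_⟩
  · intro a ha
    simp only [dif_pos ha]
    exact ht's (e ⟨a, ha⟩).2
  · intro a ha a' ha' hφ
    simp only [dif_pos ha, dif_pos ha'] at hφ
    have := e.injective (Subtype.coe_injective hφ)
    exact congrArg Subtype.val this

lemma ED.rainbow (b : ℕ) (hb : 0 < b) {α ρ σ : Type*} [Fintype α] [DecidableEq α]
    [Fintype ρ] [DecidableEq ρ] [Fintype σ] [DecidableEq σ]
    (B : α → ρ) (G : α → σ)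
    (hB : ∀ r, (univ.filter (fun a => B a = r)).card ≤ b)
    (hG : ∀ c, (univ.filter (fun a => G a = c)).card ≤ b) :
    ∃ f : α → Fin b, ∀ a a', f a = f a' → (B a = B a' ∨ G a = G a') → a = a' := by
  set cell : ρ → σ → ℕ := fun r c => (univ.filter (fun a => B a = r ∧ G a = c)).card with hcell
  have hrowcell : ∀ r, ∑ c, cell r c = (univ.filter (fun a => B a = r)).card := by
    intro r
    rw [Finset.card_eq_sum_card_fiberwise (f := G) (t := univ) (fun a _ => mem_univ _)]
    refine Finset.sum_congr rfl fun c _ => ?_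
    rw [Finset.filter_filter]
  have hcolcell : ∀ c, ∑ r, cell r c = (univ.filter (fun a => G a = c)).card := by
    intro c
    rw [Finset.card_eq_sum_card_fiberwise (f := B) (t := univ) (fun a _ => mem_univ _)]
    refine Finset.sum_congr rfl fun r _ => ?_
    rw [Finset.filter_filter, hcell]
    apply congrArg
    apply Finset.filter_congr
    intro a _
    exact and_comm
  set N : (ρ ⊕ σ) → (σ ⊕ ρ) → ℕ := fun x y =>
    match x, y with
    | Sum.inl r, Sum.inl c => cell r c
    | Sum.inl r, Sum.inr r' => if r' = r then b - (univ.filter (fun a => B a = r)).card else 0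
    | Sum.inr c, Sum.inl c' => if c' = c then b - (univ.filter (fun a => G a = c)).card else 0
    | Sum.inr c, Sum.inr r => cell r c
    with hN
  have hrow : ∀ x, ∑ y, N x y = b := by
    intro x
    rw [Fintype.sum_sum_type]
    cases x with
    | inl r =>
      have h1 : ∑ r' : ρ, N (Sum.inl r) (Sum.inr r')
          = b - (univ.filter (fun a => B a = r)).card := by
        simp [hN, Finset.sum_ite_eq' univ r]
      have h2 : ∑ c : σ, N (Sum.inl r) (Sum.inl c) = (univ.filter (fun a => B a = r)).card := by
        simpa [hN] using hrowcell r
      rw [h1, h2]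
      have := hB r
      omega
    | inr c =>
      have h1 : ∑ c' : σ, N (Sum.inr c) (Sum.inl c')
          = b - (univ.filter (fun a => G a = c)).card := by
        simp [hN, Finset.sum_ite_eq' univ c]
      have h2 : ∑ r : ρ, N (Sum.inr c) (Sum.inr r) = (univ.filter (fun a => G a = c)).card := by
        simpa [hN] using hcolcell c
      rw [h1, h2]
      have := hG c
      omega
  have hcol : ∀ y, ∑ x, N x y = b := by
    intro y
    rw [Fintype.sum_sum_type]
    cases y with
    | inl c =>
      have h1 : ∑ r : ρ, N (Sum.inl r) (Sum.inl c) = (univ.filter (fun a => G a = c)).card := by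
        simpa [hN] using hcolcell c
      have h2 : ∑ c' : σ, N (Sum.inr c') (Sum.inl c)
          = b - (univ.filter (fun a => G a = c)).card := by
        simp [hN, Finset.sum_ite_eq univ c]
      rw [h1, h2]
      have := hG c
      omega
    | inr r =>
      have h1 : ∑ r' : ρ, N (Sum.inl r') (Sum.inr r)
          = b - (univ.filter (fun a => B a = r)).card := by
        simp [hN, Finset.sum_ite_eq univ r]
      have h2 : ∑ c : σ, N (Sum.inr c) (Sum.inr r) = (univ.filter (fun a => B a = r)).card := by
        simpa [hN] using hrowcell r
      rw [h1, h2]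
      have := hB r
      omega
  obtain ⟨F, hFinj, hFcount⟩ := ED.decomp b N hrow hcol
  -- injections per cell
  have hle : ∀ r c, (univ.filter (fun a => B a = r ∧ G a = c)).card
      ≤ (univ.filter (fun m : Fin b => F m (Sum.inl r) = Sum.inl c)).card := by
    intro r c
    have := hFcount (Sum.inl r) (Sum.inl c)
    simp only [hN] at this
    rw [← this]
  choose φ hφmem hφinj using fun r c =>
    ED.inj_map hb (univ.filter (fun a => B a = r ∧ G a = c))
      (univ.filter (fun m : Fin b => F m (Sum.inl r) = Sum.inl c)) (hle r c)
  refine ⟨fun a => φ (B a) (G a) a, ?_⟩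
  have hmem : ∀ a : α, a ∈ univ.filter (fun a' => B a' = B a ∧ G a' = G a) := by
    intro a; simp
  have hstar : ∀ a : α, F (φ (B a) (G a) a) (Sum.inl (B a)) = Sum.inl (G a) := by
    intro a
    have := hφmem (B a) (G a) a (hmem a)
    simpa using this
  intro a a' hf hor
  replace hf : φ (B a) (G a) a = φ (B a') (G a') a' := hf
  have hBG : B a = B a' ∧ G a = G a' := by
    rcases hor with h | h
    · have h1 := hstar a
      have h2 := hstar a'
      rw [← hf, ← h] at h2
      rw [h1] at h2
      exact ⟨h, Sum.inl.inj h2⟩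
    · have h1 := hstar a
      have h2 := hstar a'
      rw [← hf, ← h] at h2
      rw [← h2] at h1
      have := hFinj _ h1
      exact ⟨Sum.inl.inj this, h⟩
  obtain ⟨hBa, hGa⟩ := hBG
  have ha' : a' ∈ univ.filter (fun x => B x = B a ∧ G x = G a) := by
    simp [← hBa, ← hGa]
  have hfa : φ (B a) (G a) a = φ (B a) (G a) a' := by
    rw [hf, hBa, hGa]
  exact hφinj (B a) (G a) a (hmem a) a' ha' hfa

/-- edge-distribution lemma. Elements (indexed by a finite type `α`)
with integer weights `w a ∈ {1,...,W}` are partitioned into groups via `g : α → ι`,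
each group having at most `b` elements. Given `M ⊆ α` with `|M| ≤ b` whose elements
are the heaviest of their respective groups, the elements can be distributed into `b`
parts (via `f : α → Fin b`) so that each part contains at most one element of `M`,
at most one element of each group, any two parts have total weights differing by at
most `2W`, and consequently every part has total weight within `2W` of the average
`σ/b`. -/
theorem edge_distribution
    (b W : ℕ) (hb : 1 ≤ b) (hW : 1 ≤ W)
    {α ι : Type*} [Fintype α] [DecidableEq α]
    (g : α → ι) (w : α → ℕ)
    (hw : ∀ a, 1 ≤ w a ∧ w a ≤ W)
    (hgroup : ∀ u : ι, (Finset.univ.filter (fun a => g a = u)).card ≤ b)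
    (M : Finset α) (hM : M.card ≤ b)
    (hheavy : ∀ a ∈ M, ∀ a', a' ∉ M → g a' = g a → w a' ≤ w a) :
    ∃ f : α → Fin b,
      (∀ a ∈ M, ∀ a' ∈ M, f a = f a' → a = a') ∧
      (∀ a a' : α, g a = g a' → f a = f a' → a = a') ∧
      (∀ i j : Fin b,
        ((∑ a ∈ Finset.univ.filter (fun a => f a = i), (w a : ℤ)) -
          ∑ a ∈ Finset.univ.filter (fun a => f a = j), (w a : ℤ)).natAbs ≤ 2 * W) ∧
      (∀ i : Fin b,
        (∑ a, (w a : ℝ)) / b - 2 * W ≤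
            (∑ a ∈ Finset.univ.filter (fun a => f a = i), (w a : ℝ)) ∧
          (∑ a ∈ Finset.univ.filter (fun a => f a = i), (w a : ℝ)) ≤
            (∑ a, (w a : ℝ)) / b + 2 * W) := by
  have hb0 : 0 < b := hb
  set n := Fintype.card α with hn
  set key : α → ℕ ×ₗ ℕ := fun a => toLex (if a ∈ M then 0 else 1, W - w a) with hkey
  set e0 : Fin n ≃ α := (Fintype.equivFin α).symm with he0
  set σs : Equiv.Perm (Fin n) := Tuple.sort (key ∘ e0) with hσs
  set E : Fin n ≃ α := σs.trans e0 with hE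
  have hmono : ∀ i j : Fin n, i ≤ j → key (E i) ≤ key (E j) := by
    intro i j hij
    exact Tuple.monotone_sort (key ∘ e0) hij
  set pos : α → ℕ := fun a => ((E.symm a : Fin n) : ℕ) with hpos
  have hposE : ∀ i : Fin n, pos (E i) = (i : ℕ) := by
    intro i; simp [hpos]
  have hposlt : ∀ a, pos a < n := fun a => (E.symm a).isLt
  -- M occupies an initial segment
  have hMlt : ∀ a ∈ M, pos a < M.card := by
    intro a ha
    by_contra hcon
    push_neg at hcon
    have hall : ∀ i : Fin n, i ≤ E.symm a → E i ∈ M := by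
      intro i hi
      by_contra hnotM
      have h1 : key (E i) ≤ key (E (E.symm a)) := hmono _ _ hi
      rw [E.apply_symm_apply] at h1
      simp only [hkey, if_pos ha, if_neg hnotM, Prod.Lex.le_iff, ofLex_toLex] at h1
      omega
    have hsub : (Finset.Iic (E.symm a)).image E ⊆ M := by
      intro x hx
      obtain ⟨i, hi, rfl⟩ := Finset.mem_image.1 hx
      exact hall i (Finset.mem_Iic.1 hi)
    have hcard : ((Finset.Iic (E.symm a)).image E).card = pos a + 1 := by
      rw [Finset.card_image_of_injective _ E.injective, Fin.card_Iic]
    have := Finset.card_le_card hsub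
    omega
  have hnotM : ∀ i : Fin n, M.card ≤ (i : ℕ) → E i ∉ M := by
    intro i hi hmem
    have := hMlt (E i) hmem
    rw [hposE] at this
    omega
  -- weights are antitone past position M.card
  have hanti : ∀ i j : Fin n, M.card ≤ (i : ℕ) → i ≤ j → w (E j) ≤ w (E i) := by
    intro i j hMi hij
    have hiM : E i ∉ M := hnotM i hMi
    have hjM : E j ∉ M := hnotM j (le_trans hMi hij)
    have h1 := hmono _ _ hij
    simp only [hkey, if_neg hiM, if_neg hjM, Prod.Lex.le_iff, ofLex_toLex] at h1
    have h2 : W - w (E i) ≤ W - w (E j) := by omega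
    have h3 := (hw (E i)).2
    have h4 := (hw (E j)).2
    omega
  set blk : α → ℕ := fun a => pos a / b with hblk
  set T := n / b with hT
  have hblkle : ∀ a, blk a < T + 1 :=
    fun a => Nat.lt_succ_of_le (Nat.div_le_div_right (le_of_lt (hposlt a)))
  have hdiv_eq : ∀ m t : ℕ, (m / b = t ↔ t*b ≤ m ∧ m < (t+1)*b) := by
    intro m t
    have hdm := Nat.div_add_mod m b
    have hml : m % b < b := Nat.mod_lt _ hb0
    constructor
    · intro h
      rw [h] at hdm
      have h1 : t * b = b * t := Nat.mul_comm t b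
      have h2 : (t+1)*b = b*t + b := by ring
      omega
    · rintro ⟨h1, h2⟩
      have h3 : t * b = b * t := Nat.mul_comm t b
      have h4 : (t+1)*b = b*t + b := by ring
      have h5 : m / b * b = b * (m / b) := Nat.mul_comm _ b
      -- show m / b = t
      rcases Nat.lt_trichotomy (m / b) t with hc | hc | hc
      · exfalso
        have h6 : m / b + 1 ≤ t := hc
        have h7 : (m / b + 1) * b ≤ t * b := Nat.mul_le_mul_right b h6
        have h8 : (m/b + 1) * b = b * (m/b) + b := by ring
        omega
      · exact hc
      · exfalso
        have h6 : t + 1 ≤ m / b := hc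
        have h7 : (t+1) * b ≤ (m/b) * b := Nat.mul_le_mul_right b h6
        omega
  have hcnt : ∀ t : ℕ, (univ.filter (fun a => blk a = t)).card
      = min ((t+1)*b) n - t*b := by
    intro t
    rw [← Nat.card_Ico]
    apply Finset.card_bij (fun (a : α) _ => pos a)
    · intro a ha
      simp only [Finset.mem_filter, Finset.mem_univ, true_and] at ha
      have := (hdiv_eq (pos a) t).1 ha
      simp only [Finset.mem_Ico, lt_min_iff]
      exact ⟨this.1, this.2, hposlt a⟩
    · intro a _ a' _ hpp
      have : E.symm a = E.symm a' := Fin.ext hpp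
      have := congrArg E this
      simpa using this
    · intro m hm
      simp only [Finset.mem_Ico, lt_min_iff] at hm
      refine ⟨E ⟨m, hm.2.2⟩, ?_, ?_⟩
      · simp only [Finset.mem_filter, Finset.mem_univ, true_and]
        show pos (E ⟨m, hm.2.2⟩) / b = t
        rw [hposE]
        exact (hdiv_eq m t).2 ⟨hm.1, hm.2.1⟩
      · rw [hposE]
  have hblkcard : ∀ t : ℕ, (univ.filter (fun a => blk a = t)).card ≤ b := by
    intro t
    rw [hcnt]
    have h3 : (t+1)*b = t*b + b := by ring
    omega
  have hblkfull : ∀ t : ℕ, t < T → (univ.filter (fun a => blk a = t)).card = b := by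
    intro t ht
    rw [hcnt]
    have hle2 : (t+1)*b ≤ n := by
      rw [← Nat.le_div_iff_mul_le hb0]
      omega
    have h3 : (t+1)*b = t*b + b := by ring
    omega
  -- apply the rainbow lemma
  set Bf : α → Fin (T+1) := fun a => ⟨blk a, hblkle a⟩ with hBf
  set Gf : α → {x // x ∈ univ.image g} := fun a => ⟨g a, Finset.mem_image_of_mem g (mem_univ a)⟩
    with hGf
  obtain ⟨f, hf⟩ := ED.rainbow b hb0 Bf Gf
    (by
      intro r
      have heq : (univ.filter (fun a => Bf a = r)) = (univ.filter (fun a => blk a = (r : ℕ))) := by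
        apply Finset.filter_congr
        intro a _
        simp [hBf, Fin.ext_iff]
      rw [heq]; exact hblkcard _)
    (by
      intro c
      have heq : (univ.filter (fun a => Gf a = c)) = (univ.filter (fun a => g a = (c : ι))) := by
        apply Finset.filter_congr
        intro a _
        simp [hGf, Subtype.ext_iff]
      rw [heq]; exact hgroup _)
  have hfblk : ∀ a a' : α, blk a = blk a' → f a = f a' → a = a' := by
    intro a a' hba hfa
    exact hf a a' hfa (Or.inl (by simp [hBf, Fin.ext_iff, hba]))
  have hfgrp : ∀ a a' : α, g a = g a' → f a = f a' → a = a' := by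
    intro a a' hga hfa
    exact hf a a' hfa (Or.inr (by simp [hGf, Subtype.ext_iff, hga]))
  -- single-element structure of (block, fiber) cells
  set s : ℕ → Fin b → Finset α :=
    fun t i => (univ.filter (fun a => f a = i)).filter (fun a => blk a = t) with hs
  have hmem_s : ∀ t i (a : α), a ∈ s t i ↔ (f a = i ∧ blk a = t) := by
    intro t i a
    simp [hs, Finset.mem_filter]
  have hsle1 : ∀ t i, (s t i).card ≤ 1 := by
    intro t i
    apply Finset.card_le_one.2
    intro a ha a' ha'
    rw [hmem_s] at ha ha'
    exact hfblk a a' (ha.2.trans ha'.2.symm) (ha.1.trans ha'.1.symm)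
  have hfull : ∀ t : ℕ, t < T → ∀ i : Fin b, (s t i).card = 1 := by
    intro t ht i
    have hcardb := hblkfull t ht
    have hinj : Set.InjOn f (univ.filter (fun a => blk a = t)) := by
      intro a ha a' ha' hfa
      simp only [Finset.coe_filter, Set.mem_setOf_eq] at ha ha'
      exact hfblk a a' (ha.2.trans ha'.2.symm) hfa
    have himgcard : ((univ.filter (fun a => blk a = t)).image f).card = b := by
      rw [Finset.card_image_of_injOn hinj, hcardb]
    have himg : (univ.filter (fun a => blk a = t)).image f = univ :=
      Finset.eq_univ_of_card _ (by rw [himgcard, Fintype.card_fin])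
    have hi : i ∈ (univ.filter (fun a => blk a = t)).image f := by
      rw [himg]; exact mem_univ i
    obtain ⟨a, hab, hfa⟩ := Finset.mem_image.1 hi
    simp only [Finset.mem_filter, Finset.mem_univ, true_and] at hab
    have hmem : a ∈ s t i := (hmem_s t i a).2 ⟨hfa, hab⟩
    have h1 : 0 < (s t i).card := Finset.card_pos.2 ⟨a, hmem⟩
    have h2 := hsle1 t i
    omega
  set x : ℕ → Fin b → ℤ := fun t i => ∑ a ∈ s t i, (w a : ℤ) with hx
  have hSsplit : ∀ i : Fin b,
      (∑ a ∈ univ.filter (fun a => f a = i), (w a : ℤ)) = ∑ t ∈ Finset.range (T+1), x t i := by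
    intro i
    rw [← Finset.sum_fiberwise_of_maps_to (g := blk) (t := Finset.range (T+1))
        (fun a _ => Finset.mem_range.2 (hblkle a)) (fun a => (w a : ℤ))]
  set c : ℕ → ℤ := fun t => if h : t*b < n then ((w (E ⟨t*b, h⟩)) : ℤ) else 0 with hc
  have hc0 : ∀ t, 0 ≤ c t := by
    intro t; simp only [hc]; split
    · positivity
    · exact le_refl 0
  have hcW : ∀ t, c t ≤ (W : ℤ) := by
    intro t; simp only [hc]; split
    · exact_mod_cast (hw _).2
    · exact_mod_cast Nat.zero_le W
  have hub : ∀ t, 1 ≤ t → ∀ a, blk a = t → (w a : ℤ) ≤ c t := by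
    intro t ht a hba
    obtain ⟨h1, h2⟩ := (hdiv_eq (pos a) t).1 hba
    have hlt : t*b < n := lt_of_le_of_lt h1 (hposlt a)
    simp only [hc]
    rw [dif_pos hlt]
    have hMb : M.card ≤ t*b := by
      have : 1*b ≤ t*b := Nat.mul_le_mul_right b ht
      omega
    have hle : (⟨t*b, hlt⟩ : Fin n) ≤ E.symm a := by
      change t*b ≤ pos a
      exact h1
    have := hanti ⟨t*b, hlt⟩ (E.symm a) hMb hle
    rw [E.apply_symm_apply] at this
    exact_mod_cast this
  have hlb : ∀ t, 1 ≤ t → ∀ a, blk a = t → c (t+1) ≤ (w a : ℤ) := by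
    intro t ht a hba
    obtain ⟨h1, h2⟩ := (hdiv_eq (pos a) t).1 hba
    simp only [hc]
    split
    · rename_i hlt
      have hMb : M.card ≤ pos a := by
        have : 1*b ≤ t*b := Nat.mul_le_mul_right b ht
        omega
      have hle : E.symm a ≤ (⟨(t+1)*b, hlt⟩ : Fin n) := by
        change pos a ≤ (t+1)*b
        omega
      have := hanti (E.symm a) ⟨(t+1)*b, hlt⟩ hMb hle
      rw [E.apply_symm_apply] at this
      exact_mod_cast this
    · positivity
  have hxelem : ∀ t i, (s t i).card = 1 → ∃ a, f a = i ∧ blk a = t ∧ x t i = (w a : ℤ) := by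
    intro t i h1
    obtain ⟨a, ha⟩ := Finset.card_eq_one.1 h1
    have hmem : a ∈ s t i := by rw [ha]; exact Finset.mem_singleton_self a
    rw [hmem_s] at hmem
    refine ⟨a, hmem.1, hmem.2, ?_⟩
    simp only [hx]
    rw [ha, Finset.sum_singleton]
  have hx0le : ∀ t i, 0 ≤ x t i := by
    intro t i
    simp only [hx]
    positivity
  have hxW : ∀ t i, x t i ≤ (W : ℤ) := by
    intro t i
    have h := hsle1 t i
    interval_cases h' : (s t i).card
    · have hemp : s t i = ∅ := Finset.card_eq_zero.1 h'
      simp only [hx]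
      rw [hemp, Finset.sum_empty]
      exact_mod_cast Nat.zero_le W
    · obtain ⟨a, _, _, hxa⟩ := hxelem t i h'
      rw [hxa]
      exact_mod_cast (hw a).2
  have hxub : ∀ t, 1 ≤ t → ∀ i, x t i ≤ c t := by
    intro t ht i
    have h := hsle1 t i
    interval_cases h' : (s t i).card
    · have hemp : s t i = ∅ := Finset.card_eq_zero.1 h'
      simp only [hx]
      rw [hemp, Finset.sum_empty]
      exact hc0 t
    · obtain ⟨a, _, hba, hxa⟩ := hxelem t i h'
      rw [hxa]
      exact hub t ht a hba
  have hxlb : ∀ t, 1 ≤ t → t < T → ∀ i, c (t+1) ≤ x t i := by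
    intro t ht htT i
    obtain ⟨a, _, hba, hxa⟩ := hxelem t i (hfull t htT i)
    rw [hxa]
    exact hlb t ht a hba
  have hx01 : 1 ≤ T → ∀ i, 1 ≤ x 0 i := by
    intro hT1 i
    obtain ⟨a, _, _, hxa⟩ := hxelem 0 i (hfull 0 hT1 i)
    rw [hxa]
    exact_mod_cast (hw a).1
  have htel : ∀ m : ℕ, 1 ≤ m → ∑ t ∈ Finset.Ico 1 m, (c t - c (t+1)) = c 1 - c m := by
    intro m hm
    induction m, hm using Nat.le_induction with
    | base => simp
    | succ m hm ih =>
      rw [Finset.sum_Ico_succ_top hm, ih]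
      ring
  have hpair : ∀ i j : Fin b,
      (∑ a ∈ univ.filter (fun a => f a = i), (w a : ℤ)) -
      (∑ a ∈ univ.filter (fun a => f a = j), (w a : ℤ)) ≤ 2 * (W : ℤ) := by
    intro i j
    rw [hSsplit i, hSsplit j, ← Finset.sum_sub_distrib]
    have hWpos : (1:ℤ) ≤ (W:ℤ) := by exact_mod_cast hW
    by_cases hT1 : 1 ≤ T
    · have hsplitr : ∑ t ∈ Finset.range (T+1), (x t i - x t j)
          = (x 0 i - x 0 j) + ∑ t ∈ Finset.Ico 1 (T+1), (x t i - x t j) := by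
        rw [Finset.range_eq_Ico, Finset.sum_eq_sum_Ico_succ_bot (by omega)]
      rw [hsplitr, Finset.sum_Ico_succ_top (by omega)]
      have h1 : x 0 i - x 0 j ≤ (W : ℤ) - 1 := by
        have := hxW 0 i
        have := hx01 hT1 j
        linarith
      have h2 : ∑ t ∈ Finset.Ico 1 T, (x t i - x t j) ≤ ∑ t ∈ Finset.Ico 1 T, (c t - c (t+1)) := by
        apply Finset.sum_le_sum
        intro t ht
        rw [Finset.mem_Ico] at ht
        have ha := hxub t ht.1 i
        have hb' := hxlb t ht.1 ht.2 j
        linarith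
      have h3 : x T i - x T j ≤ c T := by
        have := hxub T hT1 i
        have := hx0le T j
        linarith
      have h4 := htel T hT1
      have h5 : c 1 ≤ (W:ℤ) := hcW 1
      linarith
    · have hT0 : T = 0 := Nat.lt_one_iff.mp (Nat.lt_of_not_le hT1)
      rw [hT0]
      rw [Finset.sum_range_one]
      have := hxW 0 i
      have := hx0le 0 j
      linarith
  refine ⟨f, ?_, ?_, ?_, ?_⟩
  · intro a ha a' ha' hfa
    have hz : blk a = 0 := Nat.div_eq_of_lt (lt_of_lt_of_le (hMlt a ha) hM)
    have hz' : blk a' = 0 := Nat.div_eq_of_lt (lt_of_lt_of_le (hMlt a' ha') hM)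
    exact hfblk a a' (hz.trans hz'.symm) hfa
  · intro a a' hga hfa
    exact hfgrp a a' hga hfa
  · intro i j
    have h1 := hpair i j
    have h2 := hpair j i
    omega
  · intro i
    have hbR : (0:ℝ) < b := by exact_mod_cast hb0
    set SR : Fin b → ℝ := fun j => ∑ a ∈ univ.filter (fun a => f a = j), (w a : ℝ) with hSRdef
    have hpairR : ∀ i' j : Fin b, |SR i' - SR j| ≤ 2 * W := by
      intro i' j
      have h1 := hpair i' j
      have h2 := hpair j i'
      have hcast : ∀ k : Fin b, SR k
          = (((∑ a ∈ univ.filter (fun a => f a = k), (w a : ℤ)) : ℤ) : ℝ) := by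
        intro k
        simp only [hSRdef]
        push_cast
        rfl
      rw [hcast, hcast, ← Int.cast_sub]
      have habsz : |(∑ a ∈ univ.filter (fun a => f a = i'), (w a : ℤ)) -
          (∑ a ∈ univ.filter (fun a => f a = j), (w a : ℤ))| ≤ 2 * (W:ℤ) :=
        abs_le.2 ⟨by linarith, h1⟩
      calc |((((∑ a ∈ univ.filter (fun a => f a = i'), (w a : ℤ)) -
            ∑ a ∈ univ.filter (fun a => f a = j), (w a : ℤ)) : ℤ) : ℝ)|
          = ((|(∑ a ∈ univ.filter (fun a => f a = i'), (w a : ℤ)) -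
            ∑ a ∈ univ.filter (fun a => f a = j), (w a : ℤ)| : ℤ) : ℝ) := by
              rw [Int.cast_abs]
        _ ≤ ((2 * (W:ℤ) : ℤ) : ℝ) := by exact_mod_cast habsz
        _ = 2 * W := by push_cast; ring
    have htot : ∑ a, (w a : ℝ) = ∑ j : Fin b, SR j := by
      simp only [hSRdef]
      exact (Finset.sum_fiberwise univ f (fun a => (w a : ℝ))).symm
    have hsumdiff : ∑ j : Fin b, (SR i - SR j) = b * SR i - ∑ a, (w a : ℝ) := by
      rw [Finset.sum_sub_distrib, Finset.sum_const, Finset.card_univ, Fintype.card_fin, htot]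
      simp [nsmul_eq_mul]
    have habs : |(b : ℝ) * SR i - ∑ a, (w a : ℝ)| ≤ b * (2*W) := by
      rw [← hsumdiff]
      calc |∑ j : Fin b, (SR i - SR j)| ≤ ∑ j : Fin b, |SR i - SR j| :=
            Finset.abs_sum_le_sum_abs _ _
        _ ≤ ∑ _j : Fin b, (2*W : ℝ) := Finset.sum_le_sum (fun j _ => hpairR i j)
        _ = b * (2*W) := by
            rw [Finset.sum_const, Finset.card_univ, Fintype.card_fin, nsmul_eq_mul]
    rw [abs_le] at habs
    have hdiv : (∑ a, (w a : ℝ)) / b = SR i - ((b : ℝ) * SR i - ∑ a, (w a : ℝ))/b := by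
      field_simp
      ring
    have h7 : ((b:ℝ) * SR i - ∑ a, (w a : ℝ))/b ≤ 2*W := by
      rw [div_le_iff₀ hbR]
      nlinarith [habs.2]
    have h8 : -(2*(W:ℝ)) ≤ ((b:ℝ) * SR i - ∑ a, (w a : ℝ))/b := by
      rw [le_div_iff₀ hbR]
      nlinarith [habs.1]
    constructor
    · show (∑ a, (w a : ℝ)) / b - 2 * W ≤ SR i
      rw [hdiv]
      linarith
    · show SR i ≤ (∑ a, (w a : ℝ)) / b + 2 * W
      rw [hdiv]
      linarith
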